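/- Let M be a positive integer divisible by 4, and let s, r ∈ ℝ^M be vectors with mean zero and unit Euclidean norm (so corr(s, r) = ⟨s, r⟩ = 1 − ‖s − r‖₂²/2). Let 𝐬, 𝐫 ∈ ℂ^M be their scaled discrete Fourier transforms, 𝐬_j = (1/√M)∑_{l=0}^{M−1} s_l e^{−2πi j l/M} for j = 0, …, M−1. Suppose the Fourier coefficients of both s and r are periodic with period M/4, i.e. 𝐬_{j+M/4 mod M} = 𝐬_j and 𝐫_{j+M/4 mod M} = 𝐫_j for all j. Then, with m = M/4, 4·d_m²(𝐬, 𝐫) = 4·∑_{j=1}^{M/4} |𝐬_j − 𝐫_j|² = ‖𝐬 − 𝐫‖₂² = 2 − 2·corr(s, r). Consequently, the optimal size-m embedding for correlation approximation in this setting is f(𝐬) = [2𝐬_1, …, 2𝐬_m], which differs from the truncated DFT embedding by a constant factor of 2. -/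

import Mathlib

open Finset Complex

/-- The scaled discrete Fourier transform of `u ∈ ℝ^M`, indexed by natural numbers
(it is `M`-periodic in the index, so this agrees with mod-`M` indexing):
`𝐮_j = (1/√M) ∑_{l=0}^{M−1} u_l e^{−2πi j l / M}`. -/
noncomputable def sdftNat {M : ℕ} (u : Fin M → ℝ) : ℕ → ℂ :=
  fun j => (1 / (Real.sqrt M : ℂ)) *
    ∑ l : Fin M, (u l : ℂ) * Complex.exp (-(2 * Real.pi * Complex.I * j * (l : ℕ)) / M)


lemma orth {M : ℕ} (hM : 0 < M) (l k : Fin M) :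
    ∑ j ∈ Finset.range M,
      (Complex.exp (-(2*Real.pi*Complex.I*(l:ℕ))/M) * Complex.exp ((2*Real.pi*Complex.I*(k:ℕ))/M)) ^ j
    = if l = k then (M : ℂ) else 0 := by
  have hMne : (M : ℂ) ≠ 0 := Nat.cast_ne_zero.2 hM.ne'
  set w : ℂ := Complex.exp (-(2*Real.pi*Complex.I*(l:ℕ))/M) * Complex.exp ((2*Real.pi*Complex.I*(k:ℕ))/M) with hw
  have hwe : w = Complex.exp ((2*Real.pi*Complex.I*((k:ℕ)-(l:ℕ)))/M) := by
    rw [hw, ← Complex.exp_add]; ring_nf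
  by_cases h : l = k
  · subst h
    simp [hwe]
  · rw [if_neg h]
    have hwM : w ^ M = 1 := by
      rw [hwe, ← Complex.exp_nat_mul]
      have he : (M:ℂ) * ((2*Real.pi*Complex.I*((k:ℕ)-(l:ℕ)))/M) =
          (((k:ℤ)-(l:ℤ) : ℤ) : ℂ) * (2*Real.pi*Complex.I) := by
        field_simp; push_cast; ring
      rw [he, Complex.exp_int_mul_two_pi_mul_I]
    have h2 : (2*(Real.pi:ℂ)*Complex.I) ≠ 0 := by
      simp [Real.pi_ne_zero, Complex.I_ne_zero, Complex.ofReal_ne_zero]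
    have hw1 : w ≠ 1 := by
      rw [hwe]
      intro hcon
      rw [Complex.exp_eq_one_iff] at hcon
      obtain ⟨n, hn⟩ := hcon
      rw [div_eq_iff hMne] at hn
      have hkl : ((k:ℕ):ℂ) - ((l:ℕ):ℂ) = (n:ℂ) * M := by
        have := mul_left_cancel₀ h2 (show (2*(Real.pi:ℂ)*Complex.I) * (((k:ℕ):ℂ) - ((l:ℕ):ℂ)) =
          (2*(Real.pi:ℂ)*Complex.I) * ((n:ℂ) * M) from by linear_combination hn)
        exact this
      have hkR : ((k:ℕ):ℝ) - ((l:ℕ):ℝ) = (n:ℝ) * M := by exact_mod_cast hkl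
      have hkM : ((k:ℕ):ℝ) < M := by exact_mod_cast k.isLt
      have hlM : ((l:ℕ):ℝ) < M := by exact_mod_cast l.isLt
      have hk0 : (0:ℝ) ≤ ((k:ℕ):ℝ) := Nat.cast_nonneg _
      have hl0 : (0:ℝ) ≤ ((l:ℕ):ℝ) := Nat.cast_nonneg _
      have hMR : (0:ℝ) < M := by exact_mod_cast hM
      have hn0 : n = 0 := by
        rcases lt_trichotomy n 0 with hlt | he | hgt
        · have : (n:ℝ) ≤ -1 := by exact_mod_cast (by omega : n ≤ -1)
          nlinarith
        · exact he
        · have : (1:ℝ) ≤ (n:ℝ) := by exact_mod_cast (by omega : 1 ≤ n)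
          nlinarith
      subst hn0
      simp at hkR
      apply h
      apply Fin.ext
      exact_mod_cast (sub_eq_zero.mp hkR).symm
    rw [geom_sum_eq hw1 M, hwM]
    simp

lemma parsevalC {M : ℕ} (hM : 0 < M) (u : Fin M → ℝ) :
    ∑ j ∈ Finset.range M, sdftNat u j * (starRingEnd ℂ) (sdftNat u j)
      = (∑ l, ((u l : ℂ))^2) := by
  have hMne : (M : ℂ) ≠ 0 := Nat.cast_ne_zero.2 hM.ne'
  have hsq : ((Real.sqrt M : ℝ) : ℂ) * ((Real.sqrt M : ℝ) : ℂ) = (M:ℂ) := by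
    rw [← Complex.ofReal_mul, Real.mul_self_sqrt (Nat.cast_nonneg M)]
    norm_cast
  have hconj : ∀ j : ℕ, (starRingEnd ℂ) (sdftNat u j) =
      (1 / (Real.sqrt M : ℂ)) *
        ∑ k : Fin M, (u k : ℂ) * Complex.exp ((2 * Real.pi * Complex.I * j * (k : ℕ)) / M) := by
    intro j
    unfold sdftNat
    rw [map_mul, map_sum]
    congr 1
    · simp
    · refine Finset.sum_congr rfl fun k _ => ?_
      rw [map_mul, ← Complex.exp_conj]
      congr 1
      · simp
      · congr 1
        simp [map_div₀, map_mul, map_neg, Complex.conj_I, Complex.conj_ofReal, map_ofNat]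
  calc ∑ j ∈ Finset.range M, sdftNat u j * (starRingEnd ℂ) (sdftNat u j)
      = ∑ j ∈ Finset.range M, (1/(M:ℂ)) * ∑ l : Fin M, ∑ k : Fin M,
          ((u l : ℂ) * (u k : ℂ)) *
          ((Complex.exp (-(2*Real.pi*Complex.I*(l:ℕ))/M) * Complex.exp ((2*Real.pi*Complex.I*(k:ℕ))/M)) ^ j) := by
        refine Finset.sum_congr rfl fun j _ => ?_
        rw [hconj j]
        unfold sdftNat
        rw [show ((1:ℂ)/(Real.sqrt M : ℂ)) * (∑ l : Fin M, (u l : ℂ) * Complex.exp (-(2 * Real.pi * Complex.I * j * (l : ℕ)) / M)) *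
            ((1:ℂ)/(Real.sqrt M : ℂ) * ∑ k : Fin M, (u k : ℂ) * Complex.exp ((2 * Real.pi * Complex.I * j * (k : ℕ)) / M)) =
            ((1:ℂ)/(Real.sqrt M : ℂ) * (1/(Real.sqrt M : ℂ))) *
            ((∑ l : Fin M, (u l : ℂ) * Complex.exp (-(2 * Real.pi * Complex.I * j * (l : ℕ)) / M)) *
             (∑ k : Fin M, (u k : ℂ) * Complex.exp ((2 * Real.pi * Complex.I * j * (k : ℕ)) / M))) from by ring]
        rw [Finset.sum_mul_sum]
        rw [show (1:ℂ)/(Real.sqrt M : ℂ) * (1/(Real.sqrt M : ℂ)) = 1/(M:ℂ) from by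
          rw [div_mul_div_comm, one_mul, hsq]]
        congr 1
        refine Finset.sum_congr rfl fun l _ => Finset.sum_congr rfl fun k _ => ?_
        rw [mul_pow, ← Complex.exp_nat_mul, ← Complex.exp_nat_mul]
        rw [show (j:ℂ) * (-(2*Real.pi*Complex.I*(l:ℕ))/M) = -(2 * Real.pi * Complex.I * j * (l : ℕ)) / M from by ring,
            show (j:ℂ) * ((2*Real.pi*Complex.I*(k:ℕ))/M) = (2 * Real.pi * Complex.I * j * (k : ℕ)) / M from by ring]
        ring
    _ = (1/(M:ℂ)) * ∑ l : Fin M, ∑ k : Fin M, ((u l : ℂ) * (u k : ℂ)) *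
          ∑ j ∈ Finset.range M,
          ((Complex.exp (-(2*Real.pi*Complex.I*(l:ℕ))/M) * Complex.exp ((2*Real.pi*Complex.I*(k:ℕ))/M)) ^ j) := by
        rw [← Finset.mul_sum, Finset.sum_comm]
        congr 1
        refine Finset.sum_congr rfl fun l _ => ?_
        rw [Finset.sum_comm]
        refine Finset.sum_congr rfl fun k _ => ?_
        rw [← Finset.mul_sum]
    _ = (1/(M:ℂ)) * ∑ l : Fin M, ((u l : ℂ) * (u l : ℂ)) * M := by
        congr 1
        refine Finset.sum_congr rfl fun l _ => ?_
        rw [Finset.sum_congr rfl fun k _ => by rw [orth hM l k]]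
        simp only [mul_ite, mul_zero]
        rw [Finset.sum_ite_eq]
        simp
    _ = ∑ l, ((u l : ℂ))^2 := by
        rw [Finset.mul_sum]
        refine Finset.sum_congr rfl fun l _ => ?_
        field_simp

lemma sdft_sub {M : ℕ} (s r : Fin M → ℝ) (j : ℕ) :
    sdftNat (fun l => s l - r l) j = sdftNat s j - sdftNat r j := by
  unfold sdftNat
  rw [← mul_sub, ← Finset.sum_sub_distrib]
  congr 1
  refine Finset.sum_congr rfl fun l _ => ?_
  push_cast
  ring

lemma sdft_zero_mean {M : ℕ} (u : Fin M → ℝ) (hmean : ∑ j, u j = 0) :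
    sdftNat u 0 = 0 := by
  unfold sdftNat
  have h : (∑ l : Fin M, ((u l : ℝ) : ℂ)) = 0 := by
    exact_mod_cast congrArg (fun x : ℝ => (x : ℂ)) hmean
  simp [Complex.exp_zero, h]

lemma sdft_add_M {M : ℕ} (hM : 0 < M) (u : Fin M → ℝ) (j : ℕ) :
    sdftNat u (j + M) = sdftNat u j := by
  have hMne : (M : ℂ) ≠ 0 := Nat.cast_ne_zero.2 hM.ne'
  unfold sdftNat
  congr 1
  refine Finset.sum_congr rfl fun l _ => ?_
  congr 1
  rw [show -(2 * Real.pi * Complex.I * ((j:ℕ)+(M:ℕ) : ℕ) * (l : ℕ)) / M =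
      -(2 * Real.pi * Complex.I * j * (l : ℕ)) / M + (-(l:ℕ) : ℤ) * (2 * Real.pi * Complex.I) from by
    push_cast; field_simp; ring]
  rw [Complex.exp_add, Complex.exp_int_mul_two_pi_mul_I, mul_one]

lemma sdft_mod {M : ℕ} (hM : 0 < M) (u : Fin M → ℝ) (j : ℕ) :
    sdftNat u j = sdftNat u (j % M) := by
  conv_lhs => rw [← Nat.mod_add_div j M]
  generalize j / M = q
  induction q with
  | zero => simp
  | succ n ih =>
    rw [show j % M + M * (n + 1) = (j % M + M * n) + M from by ring, sdft_add_M hM, ih]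

lemma sdft_per_all {M : ℕ} (hM : 0 < M) (u : Fin M → ℝ)
    (hper : ∀ j < M, sdftNat u ((j + M / 4) % M) = sdftNat u j) (j : ℕ) :
    sdftNat u (j + M / 4) = sdftNat u j := by
  have h4 : M / 4 % M = M / 4 := Nat.mod_eq_of_lt (Nat.div_lt_self hM (by norm_num))
  calc sdftNat u (j + M/4) = sdftNat u ((j + M/4) % M) := sdft_mod hM u _
    _ = sdftNat u ((j % M + M/4) % M) := by rw [Nat.add_mod, h4]
    _ = sdftNat u (j % M) := hper _ (Nat.mod_lt j hM)
    _ = sdftNat u j := (sdft_mod hM u j).symm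

/-- **Example (period-`M/4` Fourier coefficients).**
Let `4 ∣ M`, let `s, r ∈ ℝ^M` have mean zero and unit Euclidean norm (so that
`corr(s, r) = ⟨s, r⟩ = 1 − ‖s − r‖₂²/2`), and suppose the scaled DFT coefficients of `s`
and `r` are periodic with period `M/4` (mod `M`). Then, with `m = M/4`,
`4·d_m²(𝐬, 𝐫) = ‖𝐬 − 𝐫‖₂² = 2 − 2·corr(s, r)`; equivalently, the embedding
`f(𝐬) = [2𝐬_1, …, 2𝐬_m]` (the truncated DFT scaled by the constant factor 2) satisfies
`∑_{j=1}^m |2𝐬_j − 2𝐫_j|² = 2 − 2·corr(s, r)`. -/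
theorem dft_period_four_correlation {M : ℕ} (hM : 0 < M) (hM4 : 4 ∣ M)
    (s r : Fin M → ℝ)
    (hs_mean : ∑ j, s j = 0) (hr_mean : ∑ j, r j = 0)
    (hs_norm : ∑ j, (s j) ^ 2 = 1) (hr_norm : ∑ j, (r j) ^ 2 = 1)
    (hs_per : ∀ j < M, sdftNat s ((j + M / 4) % M) = sdftNat s j)
    (hr_per : ∀ j < M, sdftNat r ((j + M / 4) % M) = sdftNat r j) :
    4 * ∑ j ∈ Finset.Icc 1 (M / 4), ‖sdftNat s j - sdftNat r j‖ ^ 2 =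
      ∑ j ∈ Finset.range M, ‖sdftNat s j - sdftNat r j‖ ^ 2 ∧
    ∑ j ∈ Finset.range M, ‖sdftNat s j - sdftNat r j‖ ^ 2 =
      2 - 2 * ∑ j, s j * r j ∧
    ∑ j ∈ Finset.Icc 1 (M / 4), ‖2 * sdftNat s j - 2 * sdftNat r j‖ ^ 2 =
      2 - 2 * ∑ j, s j * r j := by
  set m := M / 4 with hm_def
  set f : ℕ → ℝ := fun j => ‖sdftNat s j - sdftNat r j‖ ^ 2 with hf_def
  have hMeq : M = m + (m + (m + m)) := by omega
  have hf : ∀ j, f (j + m) = f j := by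
    intro j
    simp only [hf_def]
    rw [sdft_per_all hM s hs_per, sdft_per_all hM r hr_per]
  have hf0 : f 0 = 0 := by
    simp only [hf_def]
    rw [sdft_zero_mean s hs_mean, sdft_zero_mean r hr_mean]
    simp
  have hfm : f m = 0 := by
    rw [show m = 0 + m from (zero_add m).symm, hf, hf0]
  have hshift : ∀ n, ∑ x ∈ Finset.range n, f (m + x) = ∑ x ∈ Finset.range n, f x :=
    fun n => Finset.sum_congr rfl fun x _ => by rw [add_comm, hf]
  -- Part 1 core : range M = 4 blocks
  have e1 : ∑ j ∈ Finset.range M, f j = 4 * ∑ j ∈ Finset.range m, f j := by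
    rw [hMeq, Finset.sum_range_add, hshift, Finset.sum_range_add, hshift,
        Finset.sum_range_add, hshift]
    ring
  -- Icc 1 m = range m (both contain the same mass since f 0 = f m = 0)
  have e2 : ∑ j ∈ Finset.Icc 1 m, f j = ∑ j ∈ Finset.range m, f j := by
    have ha : ∑ j ∈ Finset.Icc 1 m, f j = ∑ j ∈ Finset.range m, f (1 + j) := by
      rw [← Finset.Ico_add_one_right_eq_Icc, Finset.sum_Ico_eq_sum_range]
      simp
    have hb : ∑ j ∈ Finset.range (m + 1), f j = (∑ j ∈ Finset.range m, f (j + 1)) + f 0 :=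
      Finset.sum_range_succ' f m
    have hc : ∑ j ∈ Finset.range (m + 1), f j = (∑ j ∈ Finset.range m, f j) + f m :=
      Finset.sum_range_succ f m
    have hd : ∑ j ∈ Finset.range m, f (1 + j) = ∑ j ∈ Finset.range m, f (j + 1) :=
      Finset.sum_congr rfl fun j _ => by rw [add_comm]
    rw [ha, hd]
    rw [hf0] at hb
    rw [hfm] at hc
    linarith
  -- Parseval
  have hP : ∑ j ∈ Finset.range M, f j = ∑ l, (s l - r l) ^ 2 := by
    have hz : ∀ z : ℂ, ((‖z‖ ^ 2 : ℝ) : ℂ) = z * (starRingEnd ℂ) z := by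
      intro z
      rw [Complex.mul_conj]
      norm_cast
      rw [Complex.sq_norm]
    simp only [hf_def]
    apply Complex.ofReal_inj.mp
    push_cast
    calc ∑ j ∈ Finset.range M, ((‖sdftNat s j - sdftNat r j‖ : ℂ)) ^ 2
        = ∑ j ∈ Finset.range M, sdftNat (fun l => s l - r l) j *
            (starRingEnd ℂ) (sdftNat (fun l => s l - r l) j) := by
          refine Finset.sum_congr rfl fun j _ => ?_
          rw [sdft_sub s r j, ← hz]
          push_cast
          ring
      _ = ∑ l, (((s l - r l : ℝ)) : ℂ) ^ 2 := parsevalC hM (fun l => s l - r l)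
      _ = ∑ l, (((s l : ℂ)) - (r l : ℂ)) ^ 2 := by push_cast; rfl
  have hcorr : ∑ l, (s l - r l) ^ 2 = 2 - 2 * ∑ j, s j * r j := by
    have : ∀ l, (s l - r l) ^ 2 = (s l ^ 2 + r l ^ 2) - 2 * (s l * r l) := fun l => by ring
    rw [Finset.sum_congr rfl fun l _ => this l, Finset.sum_sub_distrib,
        Finset.sum_add_distrib, hs_norm, hr_norm, ← Finset.mul_sum]
    ring
  refine ⟨by rw [e2, ← e1], by rw [hP, hcorr], ?_⟩
  have h4 : ∀ j : ℕ, ‖2 * sdftNat s j - 2 * sdftNat r j‖ ^ 2 = 4 * f j := by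
    intro j
    simp only [hf_def]
    rw [show (2:ℂ) * sdftNat s j - 2 * sdftNat r j = 2 * (sdftNat s j - sdftNat r j) from by ring,
        norm_mul]
    norm_num
    ring
  rw [Finset.sum_congr rfl fun j _ => h4 j, ← Finset.mul_sum, e2, ← e1, hP, hcorr]
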